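/- Let A be an n-by-n reciprocal matrix that is inconsistent, and suppose all entries of A along the Hamiltonian cycle 1→2→⋯→n→1 equal 1 (i.e., a_{k,k+1} = 1 for k = 1,...,n−1 and a_{n1} = 1). Then there exists a Hamiltonian cycle C′ such that every entry of A along C′ is at most 1 and at least one entry along C′ is strictly less than 1. -/

import Mathlib

def Reciprocal {n : ℕ} (A : Matrix (Fin n) (Fin n) ℝ) : Prop :=
  (∀ i j, 0 < A i j) ∧ ∀ i j, A j i = 1 / A i j

/-- `A` is consistent if `A = v v^{(-T)}` for some positive vector `v`. -/
def Consistent {n : ℕ} (A : Matrix (Fin n) (Fin n) ℝ) : Prop :=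
  ∃ v : Fin n → ℝ, (∀ i, 0 < v i) ∧ ∀ i j, A i j = v i / v j

set_option maxHeartbeats 1600000

open Fin.NatCast

namespace Stmt19

variable {m : ℕ}

lemma castEq (a b c : ℕ) (h : a = b + c * (m+4)) : ((a : Fin (m+4))) = (b : Fin (m+4)) := by
  subst h
  rw [Nat.cast_add]
  simp

lemma add_cast_cast (p : Fin (m+4)) (a b : ℕ) :
    p + (a:Fin (m+4)) + (b:Fin (m+4)) = p + ((a+b:ℕ) : Fin (m+4)) := by
  rw [add_assoc, ← Nat.cast_add]

lemma add_congr (p : Fin (m+4)) (a b c : ℕ) (h : a = b + c * (m+4)) :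
    p + (a : Fin (m+4)) = p + (b : Fin (m+4)) := by rw [castEq a b c h]

lemma sub_edge (p : Fin (m+4)) (a b f c : ℕ) (h : b + f = a + c * (m+4)) :
    p + (b : Fin (m+4)) = (p + (a : Fin (m+4))) - (f : Fin (m+4)) := by
  have h1 : (b : Fin (m+4)) + (f : Fin (m+4)) = (a : Fin (m+4)) := by
    rw [← Nat.cast_add, castEq (b+f) a c h]
  rw [add_sub_assoc, eq_sub_of_add_eq h1]

lemma val_succ_of_lt {k : Fin (m+4)} (h : k.val + 1 < m+4) : (k+1).val = k.val + 1 :=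
  Fin.val_add_one_of_lt (by rw [Fin.lt_iff_val_lt_val, Fin.val_last]; omega)

lemma val_succ_last {k : Fin (m+4)} (h : k.val = m+3) : (k+1).val = 0 := by
  have : k = Fin.last (m+3) := Fin.ext (by rw [Fin.val_last]; exact h)
  rw [this, Fin.last_add_one, Fin.val_zero]

lemma bij (p : Fin (m+4)) (δ : ℕ → ℕ) (h1 : ∀ k < m+4, δ k < m+4)
    (h2 : ∀ k, k < m+4 → ∀ l, l < m+4 → δ k = δ l → k = l) :
    Function.Bijective (fun k : Fin (m+4) => p + ((δ k.val : ℕ) : Fin (m+4))) := by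
  rw [← Finite.injective_iff_bijective]
  intro k l h
  have h' : ((δ k.val : ℕ) : Fin (m+4)) = ((δ l.val : ℕ) : Fin (m+4)) := add_left_cancel h
  have hv := congrArg Fin.val h'
  rw [Fin.val_natCast, Fin.val_natCast, Nat.mod_eq_of_lt (h1 _ k.isLt),
    Nat.mod_eq_of_lt (h1 _ l.isLt)] at hv
  exact Fin.ext (h2 _ k.isLt _ l.isLt hv)

def d1 (s n k : ℕ) : ℕ :=
  if k = 0 then 0
  else if k ≤ s - 2 then s + 1 - k
  else if k = s - 1 then 1
  else if k ≤ n - 2 then n + s - 1 - k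
  else 2

lemma caseBig (A : Matrix (Fin (m+4)) (Fin (m+4)) ℝ) (s : ℕ) (hs3 : 3 ≤ s) (hsn : s ≤ m+2)
    (p : Fin (m+4)) (hchord : A p (p + ((s:ℕ) : Fin (m+4))) < 1)
    (hback : ∀ f : ℕ, f < s → ∀ x : Fin (m+4), A x (x - (f : Fin (m+4))) ≤ 1) :
    ∃ γ : Fin (m+4) → Fin (m+4), Function.Bijective γ ∧
      (∀ k, A (γ k) (γ (k + 1)) ≤ 1) ∧ ∃ k, A (γ k) (γ (k + 1)) < 1 := by
  have key : ∀ K, K < m+4 → 0 < K →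
      ∃ f c, 0 < f ∧ f < s ∧
        d1 s (m+4) (if K = m+3 then 0 else K+1) + f = d1 s (m+4) K + c * (m+4) := by
    intro K hK hK0
    rcases Nat.lt_or_ge K (s-2) with h1 | h1
    · exact ⟨1, 0, by omega, by omega, by unfold d1; split_ifs <;> first | contradiction | omega⟩
    rcases Nat.eq_or_lt_of_le h1 with h2 | h2
    · exact ⟨2, 0, by omega, by omega, by unfold d1; split_ifs <;> first | contradiction | omega⟩
    rcases Nat.lt_or_ge K s with h3 | h3
    · exact ⟨2, 1, by omega, by omega, by unfold d1; split_ifs <;> first | contradiction | omega⟩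
    rcases Nat.lt_or_ge K (m+2) with h4 | h4
    · exact ⟨1, 0, by omega, by omega, by unfold d1; split_ifs <;> first | contradiction | omega⟩
    rcases Nat.eq_or_lt_of_le h4 with h5 | h5
    · exact ⟨s-1, 0, by omega, by omega, by unfold d1; split_ifs <;> first | contradiction | omega⟩
    · exact ⟨2, 0, by omega, by omega, by unfold d1; split_ifs <;> first | contradiction | omega⟩
  have chord0 : A (p + ((d1 s (m+4) 0 : ℕ) : Fin (m+4))) (p + ((d1 s (m+4) 1 : ℕ) : Fin (m+4))) < 1 := by
    have ea : d1 s (m+4) 0 = 0 := by unfold d1; simp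
    have eb : d1 s (m+4) 1 = s := by unfold d1; split_ifs <;> first | contradiction | omega
    rw [ea, eb, Nat.cast_zero, add_zero]
    exact hchord
  refine ⟨fun k => p + ((d1 s (m+4) k.val : ℕ) : Fin (m+4)),
    bij p _ (by intro k hk; unfold d1; split_ifs <;> first | contradiction | omega)
      (by intro k hk l hl h; unfold d1 at h; split_ifs at h <;> first | contradiction | omega),
    ?_, ?_⟩
  · intro k
    dsimp only
    by_cases hk0 : k.val = 0
    · have e1 : (k+1).val = 1 := by rw [val_succ_of_lt (by omega), hk0]
      rw [hk0, e1]
      exact le_of_lt chord0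
    · have e1 : (k+1).val = if k.val = m+3 then 0 else k.val + 1 := by
        split_ifs with h
        exacts [val_succ_last h, val_succ_of_lt (by omega)]
      obtain ⟨f, c, hf0, hfs, hei⟩ := key k.val k.isLt (by omega)
      rw [e1, sub_edge p _ _ f c hei]
      exact hback f hfs _
  · refine ⟨0, ?_⟩
    dsimp only
    have e0 : (0 : Fin (m+4)).val = 0 := rfl
    have e1 : ((0:Fin (m+4))+1).val = 1 := by
      rw [val_succ_of_lt (show (0 : Fin (m+4)).val + 1 < m+4 by rw [e0]; omega), e0]
    rw [e0, e1]
    exact chord0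

def d2a (k : ℕ) : ℕ := if k = 0 then 0 else if k = 1 then 2 else if k = 2 then 1 else k

lemma case2a (A : Matrix (Fin (m+4)) (Fin (m+4)) ℝ) (q : Fin (m+4))
    (h1 : A q (q + ((2:ℕ) : Fin (m+4))) < 1)
    (h2 : A (q + ((1:ℕ) : Fin (m+4))) (q + ((3:ℕ) : Fin (m+4))) ≤ 1)
    (hfwd : ∀ x, A x (x + ((1:ℕ) : Fin (m+4))) ≤ 1)
    (hb1 : ∀ x, A x (x - ((1:ℕ) : Fin (m+4))) ≤ 1) :
    ∃ γ : Fin (m+4) → Fin (m+4), Function.Bijective γ ∧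
      (∀ k, A (γ k) (γ (k + 1)) ≤ 1) ∧ ∃ k, A (γ k) (γ (k + 1)) < 1 := by
  have ea0 : d2a 0 = 0 := rfl
  have ea1 : d2a 1 = 2 := rfl
  have ea2 : d2a 2 = 1 := rfl
  have ea3 : d2a 3 = 3 := rfl
  have chord0 : A (q + ((d2a 0 : ℕ) : Fin (m+4))) (q + ((d2a 1:ℕ) : Fin (m+4))) < 1 := by
    rw [ea0, ea1, Nat.cast_zero, add_zero]
    exact h1
  refine ⟨fun k => q + ((d2a k.val : ℕ) : Fin (m+4)),
    bij q _ (by intro k hk; unfold d2a; split_ifs <;> first | contradiction | omega)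
      (by intro k hk l hl h; unfold d2a at h; split_ifs at h <;> first | contradiction | omega),
    ?_, ?_⟩
  · intro k
    dsimp only
    by_cases hk0 : k.val = 0
    · have e1 : (k+1).val = 1 := by rw [val_succ_of_lt (by omega), hk0]
      rw [hk0, e1]; exact le_of_lt chord0
    by_cases hk1 : k.val = 1
    · have e1 : (k+1).val = 2 := by rw [val_succ_of_lt (by omega), hk1]
      rw [hk1, e1, ea1, ea2, sub_edge q 2 1 1 0 (by omega)]
      exact hb1 _
    by_cases hk2 : k.val = 2
    · have e1 : (k+1).val = 3 := by rw [val_succ_of_lt (by omega), hk2]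
      rw [hk2, e1, ea2, ea3]
      exact h2
    by_cases hk3 : k.val = m+3
    · have e1 : (k+1).val = 0 := val_succ_last hk3
      have ea : d2a (m+3) = m+3 := by unfold d2a; split_ifs <;> first | contradiction | omega
      rw [hk3, e1, ea, ea0]
      have e : q + ((0:ℕ) : Fin (m+4)) = (q + ((m+3:ℕ):Fin (m+4))) + ((1:ℕ):Fin (m+4)) :=
        ((add_cast_cast q (m+3) 1).trans (add_congr q (m+3+1) 0 1 (by omega))).symm
      rw [e]
      exact hfwd _
    · have e1 : (k+1).val = k.val + 1 := val_succ_of_lt (by omega)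
      have ea : d2a k.val = k.val := by unfold d2a; split_ifs <;> first | contradiction | omega
      have eb : d2a (k.val+1) = k.val+1 := by unfold d2a; split_ifs <;> first | contradiction | omega
      rw [e1, ea, eb, (add_cast_cast q k.val 1).symm]
      exact hfwd _
  · refine ⟨0, ?_⟩
    dsimp only
    have e0 : (0 : Fin (m+4)).val = 0 := rfl
    have e1 : ((0:Fin (m+4))+1).val = 1 := by
      rw [val_succ_of_lt (show (0 : Fin (m+4)).val + 1 < m+4 by rw [e0]; omega), e0]
    rw [e0, e1]
    exact chord0

def d2b (n k : ℕ) : ℕ := if k = 0 then 0 else if k ≤ n-2 then n-1-k else n-1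

lemma case2b (A : Matrix (Fin (m+4)) (Fin (m+4)) ℝ) (P : Fin (m+4))
    (h1 : A P (P + ((m+2:ℕ) : Fin (m+4))) < 1)
    (h2 : A (P + ((1:ℕ) : Fin (m+4))) (P + ((m+3:ℕ) : Fin (m+4))) ≤ 1)
    (hfwd : ∀ x, A x (x + ((1:ℕ) : Fin (m+4))) ≤ 1)
    (hb1 : ∀ x, A x (x - ((1:ℕ) : Fin (m+4))) ≤ 1) :
    ∃ γ : Fin (m+4) → Fin (m+4), Function.Bijective γ ∧
      (∀ k, A (γ k) (γ (k + 1)) ≤ 1) ∧ ∃ k, A (γ k) (γ (k + 1)) < 1 := by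
  have eb0 : d2b (m+4) 0 = 0 := rfl
  have eb1 : d2b (m+4) 1 = m+2 := by unfold d2b; split_ifs <;> first | contradiction | omega
  have chord0 : A (P + ((d2b (m+4) 0 : ℕ) : Fin (m+4))) (P + ((d2b (m+4) 1:ℕ) : Fin (m+4))) < 1 := by
    rw [eb0, eb1, Nat.cast_zero, add_zero]
    exact h1
  refine ⟨fun k => P + ((d2b (m+4) k.val : ℕ) : Fin (m+4)),
    bij P _ (by intro k hk; unfold d2b; split_ifs <;> first | contradiction | omega)
      (by intro k hk l hl h; unfold d2b at h; split_ifs at h <;> first | contradiction | omega),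
    ?_, ?_⟩
  · intro k
    dsimp only
    by_cases hk0 : k.val = 0
    · have e1 : (k+1).val = 1 := by rw [val_succ_of_lt (by omega), hk0]
      rw [hk0, e1]; exact le_of_lt chord0
    by_cases hkm2 : k.val = m+2
    · have e1 : (k+1).val = m+3 := by rw [val_succ_of_lt (by omega), hkm2]
      have ea : d2b (m+4) (m+2) = 1 := by unfold d2b; split_ifs <;> first | contradiction | omega
      have eb : d2b (m+4) (m+3) = m+3 := by unfold d2b; split_ifs <;> first | contradiction | omega
      rw [hkm2, e1, ea, eb]
      exact h2
    by_cases hk3 : k.val = m+3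
    · have e1 : (k+1).val = 0 := val_succ_last hk3
      have ea : d2b (m+4) (m+3) = m+3 := by unfold d2b; split_ifs <;> first | contradiction | omega
      rw [hk3, e1, ea, eb0]
      have e : P + ((0:ℕ) : Fin (m+4)) = (P + ((m+3:ℕ):Fin (m+4))) + ((1:ℕ):Fin (m+4)) :=
        ((add_cast_cast P (m+3) 1).trans (add_congr P (m+3+1) 0 1 (by omega))).symm
      rw [e]
      exact hfwd _
    · -- 1 ≤ k ≤ m+1
      have e1 : (k+1).val = k.val + 1 := val_succ_of_lt (by omega)
      have ea : d2b (m+4) k.val = m+3-k.val := by unfold d2b; split_ifs <;> first | contradiction | omega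
      have eb : d2b (m+4) (k.val+1) = m+2-k.val := by unfold d2b; split_ifs <;> first | contradiction | omega
      rw [e1, ea, eb, sub_edge P (m+3-k.val) (m+2-k.val) 1 0 (by omega)]
      exact hb1 _
  · refine ⟨0, ?_⟩
    dsimp only
    have e0 : (0 : Fin (m+4)).val = 0 := rfl
    have e1 : ((0:Fin (m+4))+1).val = 1 := by
      rw [val_succ_of_lt (show (0 : Fin (m+4)).val + 1 < m+4 by rw [e0]; omega), e0]
    rw [e0, e1]
    exact chord0

def d2c (n h k : ℕ) : ℕ := if k < h then 2*k else 2*n-1-2*k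

lemma case2c (A : Matrix (Fin (m+4)) (Fin (m+4)) ℝ) (h : ℕ) (hn : m+4 = 2*h) (p : Fin (m+4))
    (hF : ∀ t : ℕ, A (p + ((2*t:ℕ) : Fin (m+4))) (p + ((2*t+2:ℕ) : Fin (m+4))) < 1)
    (hG : ∀ t : ℕ, 1 < A (p + ((2*t+1:ℕ) : Fin (m+4))) (p + ((2*t+3:ℕ) : Fin (m+4))))
    (hfwd : ∀ x, A x (x + ((1:ℕ) : Fin (m+4))) ≤ 1)
    (hb1 : ∀ x, A x (x - ((1:ℕ) : Fin (m+4))) ≤ 1)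
    (hinv : ∀ i j, 1 < A i j → A j i < 1) :
    ∃ γ : Fin (m+4) → Fin (m+4), Function.Bijective γ ∧
      (∀ k, A (γ k) (γ (k + 1)) ≤ 1) ∧ ∃ k, A (γ k) (γ (k + 1)) < 1 := by
  have ec0 : d2c (m+4) h 0 = 0 := by unfold d2c; split_ifs <;> omega
  have ec1 : d2c (m+4) h 1 = 2 := by unfold d2c; split_ifs <;> omega
  have chord0 : A (p + ((d2c (m+4) h 0 : ℕ) : Fin (m+4))) (p + ((d2c (m+4) h 1:ℕ) : Fin (m+4))) < 1 := by
    rw [ec0, ec1, Nat.cast_zero, add_zero]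
    have e := hF 0
    rw [show (2*0:ℕ) = 0 from rfl, show (2*0+2:ℕ) = 2 from rfl, Nat.cast_zero, add_zero] at e
    exact e
  refine ⟨fun k => p + ((d2c (m+4) h k.val : ℕ) : Fin (m+4)),
    bij p _ (by intro k hk; unfold d2c; split_ifs <;> omega)
      (by intro k hk l hl hh; unfold d2c at hh; split_ifs at hh <;> omega),
    ?_, ?_⟩
  · intro k
    dsimp only
    by_cases hklt : k.val + 1 < h
    · have e1 : (k+1).val = k.val + 1 := val_succ_of_lt (by omega)
      have ea : d2c (m+4) h k.val = 2*k.val := by unfold d2c; split_ifs <;> omega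
      have eb : d2c (m+4) h (k.val+1) = 2*k.val+2 := by unfold d2c; split_ifs <;> omega
      rw [e1, ea, eb]
      exact le_of_lt (hF k.val)
    by_cases hkh : k.val + 1 = h
    · have e1 : (k+1).val = k.val + 1 := val_succ_of_lt (by omega)
      have ea : d2c (m+4) h k.val = 2*k.val := by unfold d2c; split_ifs <;> omega
      have eb : d2c (m+4) h (k.val+1) = m+3 := by unfold d2c; split_ifs <;> omega
      rw [e1, ea, eb]
      have e : p + ((m+3:ℕ) : Fin (m+4)) = (p + ((2*k.val:ℕ):Fin (m+4))) + ((1:ℕ):Fin (m+4)) :=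
        ((add_cast_cast p (2*k.val) 1).trans (add_congr p (2*k.val+1) (m+3) 0 (by omega))).symm
      rw [e]
      exact hfwd _
    by_cases hk3 : k.val = m+3
    · have e1 : (k+1).val = 0 := val_succ_last hk3
      have ea : d2c (m+4) h (m+3) = 1 := by unfold d2c; split_ifs <;> omega
      rw [hk3, e1, ea, ec0, sub_edge p 1 0 1 0 (by omega)]
      exact hb1 _
    · -- h ≤ k ≤ m+2
      have e1 : (k+1).val = k.val + 1 := val_succ_of_lt (by omega)
      have ea : d2c (m+4) h k.val = 2*(m+4)-1-2*k.val := by unfold d2c; split_ifs <;> omega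
      have eb : d2c (m+4) h (k.val+1) = 2*(m+4)-3-2*k.val := by unfold d2c; split_ifs <;> omega
      rw [e1, ea, eb]
      have hg := hG (m+2-k.val)
      rw [show 2*(m+2-k.val)+1 = 2*(m+4)-3-2*k.val from by omega,
          show 2*(m+2-k.val)+3 = 2*(m+4)-1-2*k.val from by omega] at hg
      exact le_of_lt (hinv _ _ hg)
  · refine ⟨0, ?_⟩
    dsimp only
    have e0 : (0 : Fin (m+4)).val = 0 := rfl
    have e1 : ((0:Fin (m+4))+1).val = 1 := by
      rw [val_succ_of_lt (show (0 : Fin (m+4)).val + 1 < m+4 by rw [e0]; omega), e0]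
    rw [e0, e1]
    exact chord0

end Stmt19

/-- If `A` is an inconsistent reciprocal matrix all of whose entries along the
standard Hamiltonian cycle `1 → 2 → ⋯ → n → 1` equal `1`, then there is a
Hamiltonian cycle `C'` with all entries of `A` along `C'` at most `1` and at
least one entry strictly less than `1`. -/
theorem stmt19 {n : ℕ} [NeZero n] (A : Matrix (Fin n) (Fin n) ℝ) (hA : Reciprocal A)
    (hinc : ¬ Consistent A)
    (hcyc : ∀ k : Fin n, A k (k + 1) = 1) :
    ∃ γ : Fin n → Fin n, Function.Bijective γ ∧
      (∀ k : Fin n, A (γ k) (γ (k + 1)) ≤ 1) ∧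
      ∃ k : Fin n, A (γ k) (γ (k + 1)) < 1 := by
  classical
  obtain ⟨hpos, hrec⟩ := hA
  have hdiag : ∀ i, A i i = 1 := by
    intro i
    have h := hrec i i
    rw [eq_div_iff (ne_of_gt (hpos i i))] at h
    rcases mul_self_eq_one_iff.mp h with h1 | h1
    · exact h1
    · have := hpos i i
      nlinarith
  have hinv : ∀ i j, 1 < A i j → A j i < 1 := by
    intro i j h
    rw [hrec i j, div_lt_one (hpos i j)]
    exact h
  have hinvlt : ∀ i j, A i j < 1 → 1 < A j i := by
    intro i j h
    rw [hrec i j, one_lt_div (hpos i j)]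
    exact h
  have hinvle : ∀ i j, 1 ≤ A i j → A j i ≤ 1 := by
    intro i j h
    rw [hrec i j, div_le_one (hpos i j)]
    exact h
  have hstrict : ∃ i j, A i j < 1 := by
    by_contra hno
    push_neg at hno
    refine hinc ⟨fun _ => 1, fun _ => one_pos, fun i j => ?_⟩
    have h1 := hno i j
    have h2 := hinvle j i (hno j i)
    have : A i j = 1 := le_antisymm h2 h1
    rw [this]
    norm_num
  obtain ⟨i0, j0, hij⟩ := hstrict
  set Q : ℕ → Prop := fun f => ∃ x : Fin n, 1 < A x (x - (f : Fin n)) with hQdef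
  have hQw : Q ((j0 - i0).val) := by
    refine ⟨j0, ?_⟩
    rw [Fin.cast_val_eq_self, sub_sub_cancel]
    exact hinvlt _ _ hij
  have hQex : ∃ f, Q f := ⟨_, hQw⟩
  set s := Nat.find hQex with hsdef
  have hQs : Q s := Nat.find_spec hQex
  have hback : ∀ f : ℕ, f < s → ∀ x : Fin n, A x (x - (f : Fin n)) ≤ 1 := by
    intro f hf x
    refine le_of_not_gt (fun hgt => ?_)
    exact Nat.find_min hQex hf ⟨x, hgt⟩
  have hs2 : 2 ≤ s := by
    by_contra h2
    push_neg at h2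
    have hcases : s = 0 ∨ s = 1 := by omega
    rcases hcases with h | h <;> rw [h] at hQs <;> obtain ⟨x, hx⟩ := hQs
    · rw [Nat.cast_zero, sub_zero, hdiag x] at hx
      exact lt_irrefl 1 hx
    · rw [Nat.cast_one] at hx
      have e : A (x-1) x = 1 := by
        have := hcyc (x-1)
        rwa [sub_add_cancel] at this
      rw [hrec (x-1) x, e] at hx
      norm_num at hx
  have hslt : s < n := lt_of_le_of_lt (Nat.find_le hQw) (j0 - i0).isLt
  have hsne : s ≠ n - 1 := by
    intro he
    rw [he] at hQs
    obtain ⟨x, hx⟩ := hQs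
    have h1 : ((n-1:ℕ):Fin n) + 1 = 0 := by
      rw [show (1 : Fin n) = ((1:ℕ) : Fin n) from (Nat.cast_one).symm, ← Nat.cast_add,
        show n-1+1 = n from by omega, Fin.natCast_self]
    have e : x - ((n-1:ℕ) : Fin n) = x + 1 := by
      rw [sub_eq_iff_eq_add, add_assoc, add_comm (1 : Fin n), h1, add_zero]
    rw [e, hcyc x] at hx
    norm_num at hx
  obtain ⟨m, rfl⟩ : ∃ m, n = m + 4 := ⟨n - 4, by omega⟩
  have hfwd : ∀ x : Fin (m+4), A x (x + ((1:ℕ) : Fin (m+4))) ≤ 1 := by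
    intro x
    rw [Nat.cast_one]
    exact le_of_eq (hcyc x)
  have hb1 : ∀ x : Fin (m+4), A x (x - ((1:ℕ) : Fin (m+4))) ≤ 1 := hback 1 (by omega)
  obtain ⟨x0, hx0⟩ := hQs
  rcases Nat.lt_or_ge s 3 with hs | hs3
  · -- s = 2
    have hs2' : s = 2 := by omega
    rw [hs2'] at hx0
    by_cases hA2 : ∃ q : Fin (m+4), A q (q + ((2:ℕ):Fin (m+4))) < 1 ∧
        A (q + ((1:ℕ):Fin (m+4))) (q + ((3:ℕ):Fin (m+4))) ≤ 1
    · obtain ⟨q, hq1, hq2⟩ := hA2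
      exact Stmt19.case2a A q hq1 hq2 hfwd hb1
    push_neg at hA2
    by_cases hB2 : ∃ q : Fin (m+4), 1 < A q (q + ((2:ℕ):Fin (m+4))) ∧
        1 ≤ A (q + ((1:ℕ):Fin (m+4))) (q + ((3:ℕ):Fin (m+4)))
    · obtain ⟨q, hq1, hq2⟩ := hB2
      apply Stmt19.case2b A (q + ((2:ℕ):Fin (m+4)))
      · have e : (q + ((2:ℕ):Fin (m+4))) + ((m+2:ℕ):Fin (m+4)) = q := by
          rw [Stmt19.add_cast_cast]
          exact (Stmt19.add_congr q (2+(m+2)) 0 1 (by omega)).trans (by rw [Nat.cast_zero, add_zero])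
        rw [e]
        exact hinv _ _ hq1
      · have e1 : (q + ((2:ℕ):Fin (m+4))) + ((1:ℕ):Fin (m+4)) = q + ((3:ℕ):Fin (m+4)) := by
          rw [Stmt19.add_cast_cast]
        have e2 : (q + ((2:ℕ):Fin (m+4))) + ((m+3:ℕ):Fin (m+4)) = q + ((1:ℕ):Fin (m+4)) := by
          rw [Stmt19.add_cast_cast]
          exact Stmt19.add_congr q (2+(m+3)) 1 1 (by omega)
        rw [e1, e2]
        exact hinvle _ _ hq2
      · exact hfwd
      · exact hb1
    push_neg at hB2
    have hpp : A (x0 - ((2:ℕ):Fin (m+4))) ((x0 - ((2:ℕ):Fin (m+4))) + ((2:ℕ):Fin (m+4))) < 1 := by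
      rw [sub_add_cancel]
      exact hinv _ _ hx0
    generalize hgen : x0 - ((2:ℕ):Fin (m+4)) = pp at hpp
    have hFG : ∀ t : ℕ, A (pp + ((2*t:ℕ):Fin (m+4))) (pp + ((2*t+2:ℕ):Fin (m+4))) < 1 ∧
        1 < A (pp + ((2*t+1:ℕ):Fin (m+4))) (pp + ((2*t+3:ℕ):Fin (m+4))) := by
      intro t
      induction t with
      | zero =>
        constructor
        · have e0 : pp + ((2*0:ℕ):Fin (m+4)) = pp := by norm_num
          have e2 : pp + ((2*0+2:ℕ):Fin (m+4)) = pp + ((2:ℕ):Fin (m+4)) := by norm_num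
          rw [e0, e2]
          exact hpp
        · have hg := hA2 pp hpp
          have e1 : pp + ((2*0+1:ℕ):Fin (m+4)) = pp + ((1:ℕ):Fin (m+4)) := by norm_num
          have e3 : pp + ((2*0+3:ℕ):Fin (m+4)) = pp + ((3:ℕ):Fin (m+4)) := by norm_num
          rw [e1, e3]
          exact hg
      | succ t ih =>
        obtain ⟨hFt, hGt⟩ := ih
        have premise : 1 < A (pp + ((2*t+1:ℕ):Fin (m+4)))
            ((pp + ((2*t+1:ℕ):Fin (m+4))) + ((2:ℕ):Fin (m+4))) := by
          rw [Stmt19.add_cast_cast, show (2*t+1+2:ℕ) = 2*t+3 from by omega]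
          exact hGt
        have hF1 := hB2 _ premise
        rw [Stmt19.add_cast_cast, Stmt19.add_cast_cast,
          show (2*t+1+1:ℕ) = 2*(t+1) from by omega,
          show (2*t+1+3:ℕ) = 2*(t+1)+2 from by omega] at hF1
        have premise2 : A (pp + ((2*(t+1):ℕ):Fin (m+4)))
            ((pp + ((2*(t+1):ℕ):Fin (m+4))) + ((2:ℕ):Fin (m+4))) < 1 := by
          rw [Stmt19.add_cast_cast]
          exact hF1
        have hG1 := hA2 _ premise2
        rw [Stmt19.add_cast_cast, Stmt19.add_cast_cast] at hG1
        exact ⟨hF1, hG1⟩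
    have heven : ∃ hh : ℕ, m+4 = 2*hh := by
      by_contra hodd
      push_neg at hodd
      have hodd2 := hodd ((m+4)/2)
      have hFo := (hFG ((m+5)/2)).1
      rw [show 2*((m+5)/2) = m+5 from by omega] at hFo
      rw [Stmt19.add_congr pp (m+5) 1 1 (by omega), Stmt19.add_congr pp (m+5+2) 3 1 (by omega)] at hFo
      have hGo := (hFG 0).2
      have e3 : pp + ((2*0+1:ℕ):Fin (m+4)) = pp + ((1:ℕ):Fin (m+4)) := by norm_num
      have e4 : pp + ((2*0+3:ℕ):Fin (m+4)) = pp + ((3:ℕ):Fin (m+4)) := by norm_num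
      rw [e3, e4] at hGo
      exact absurd hFo (not_lt.mpr (le_of_lt hGo))
    obtain ⟨hh, hhn⟩ := heven
    exact Stmt19.case2c A hh hhn pp (fun t => (hFG t).1) (fun t => (hFG t).2) hfwd hb1 hinv
  · -- s ≥ 3
    refine Stmt19.caseBig A s hs3 (by omega) (x0 - ((s:ℕ) : Fin (m+4))) ?_ hback
    rw [sub_add_cancel]
    exact hinv _ _ hx0
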